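/- Let K be ℝ or ℂ, n ≥ 1, and let G be an abelian subgroup of GL(n,K). Then there exists a G-invariant, dense, open set U in K^n such that: (i) every orbit of G contained in U is minimal in U; and (ii) K^n − U is a union of at most n G-invariant K-linear subspaces of K^n, each of dimension n−1 or n−2 over K. -/

import Mathlib

/-- The orbit of a vector `v` under a subgroup `G` of `GL(n, K)` acting linearly on `Kⁿ`. -/
def glOrbit {K : Type*} [Field K] {n : ℕ} (G : Subgroup (Matrix.GeneralLinearGroup (Fin n) K))
    (v : Fin n → K) : Set (Fin n → K) :=
  {w | ∃ A ∈ G, (A : Matrix (Fin n) (Fin n) K).mulVec v = w}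

open Module Submodule

set_option maxHeartbeats 8000000
set_option synthInstance.maxHeartbeats 400000

namespace StructThm

variable {K : Type*} [RCLike K] {n : ℕ}
  (G : Subgroup (Matrix.GeneralLinearGroup (Fin n) K))

/-- The set of matrices of elements of `G`. -/
def mset0 : Set (Matrix (Fin n) (Fin n) K) :=
  {M | ∃ g ∈ G, (g : Matrix (Fin n) (Fin n) K) = M}

/-- The set of matrices of elements of `G` which commute with all of `G`; if `G` is abelian
this is all of `G`'s matrices.  Working with this set makes commutativity unconditional. -/
def mset : Set (Matrix (Fin n) (Fin n) K) :=
  {M ∈ mset0 G | ∀ N ∈ mset0 G, M * N = N * M}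

lemma mset_subset_mset0 : mset G ⊆ mset0 G := fun _ h => h.1

lemma one_mem_mset : (1 : Matrix (Fin n) (Fin n) K) ∈ mset G :=
  ⟨⟨1, G.one_mem, by simp⟩, fun N _ => by simp⟩

lemma mem_mset (hG : ∀ A ∈ G, ∀ B ∈ G, A * B = B * A)
    {g : Matrix.GeneralLinearGroup (Fin n) K} (hg : g ∈ G) :
    (g : Matrix (Fin n) (Fin n) K) ∈ mset G := by
  refine ⟨⟨g, hg, rfl⟩, ?_⟩
  rintro N ⟨h, hh, rfl⟩
  rw [← Units.val_mul, ← Units.val_mul, hG g hg h hh]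

lemma mul_mem_mset {M N : Matrix (Fin n) (Fin n) K} (hM : M ∈ mset G) (hN : N ∈ mset G) :
    M * N ∈ mset G := by
  obtain ⟨⟨g, hg, hgM⟩, hMc⟩ := hM
  obtain ⟨⟨h, hh, hhN⟩, hNc⟩ := hN
  refine ⟨⟨g * h, G.mul_mem hg hh, by rw [Units.val_mul, hgM, hhN]⟩, ?_⟩

  intro P hP
  rw [mul_assoc, hNc P hP, ← mul_assoc, hMc P hP, mul_assoc]

lemma inv_mem_mset {M : Matrix (Fin n) (Fin n) K} (hM : M ∈ mset G) :
    ∃ M' ∈ mset G, M * M' = 1 ∧ M' * M = 1 := by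
  obtain ⟨⟨g, hg, hgM⟩, hMc⟩ := hM
  have h1 : M * ((g⁻¹ : Matrix.GeneralLinearGroup (Fin n) K) : Matrix (Fin n) (Fin n) K) = 1 := by
    rw [← hgM, ← Units.val_mul, mul_inv_cancel]; rfl
  have h2 : ((g⁻¹ : Matrix.GeneralLinearGroup (Fin n) K) : Matrix (Fin n) (Fin n) K) * M = 1 := by
    rw [← hgM, ← Units.val_mul, inv_mul_cancel]; rfl
  refine ⟨_, ⟨⟨g⁻¹, G.inv_mem hg, rfl⟩, ?_⟩, h1, h2⟩
  intro N hN
  have hc := hMc N hN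
  calc (↑g⁻¹ : Matrix (Fin n) (Fin n) K) * N
      = ↑g⁻¹ * N * (M * ↑g⁻¹) := by rw [h1, mul_one]
    _ = ↑g⁻¹ * (N * M) * ↑g⁻¹ := by simp only [mul_assoc]
    _ = ↑g⁻¹ * (M * N) * ↑g⁻¹ := by rw [hc]
    _ = (↑g⁻¹ * M) * (N * ↑g⁻¹) := by simp only [mul_assoc]
    _ = N * ↑g⁻¹ := by rw [h2, one_mul]

lemma mset_comm {M N : Matrix (Fin n) (Fin n) K} (hM : M ∈ mset G) (hN : N ∈ mset G) :
    M * N = N * M := hM.2 N (mset_subset_mset0 G hN)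

/-- The linear span of the (commuting) matrices of `G`. -/
def aspan : Submodule K (Matrix (Fin n) (Fin n) K) := span K (mset G)

lemma one_mem_aspan : (1 : Matrix (Fin n) (Fin n) K) ∈ aspan G :=
  subset_span (one_mem_mset G)

lemma mul_mem_aspan {a b : Matrix (Fin n) (Fin n) K} (ha : a ∈ aspan G) (hb : b ∈ aspan G) :
    a * b ∈ aspan G := by
  have h : aspan G * aspan G ≤ aspan G := by
    rw [aspan, Submodule.span_mul_span]
    exact span_mono (by rintro _ ⟨x, hx, y, hy, rfl⟩; exact mul_mem_mset G hx hy)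
  exact h (Submodule.mul_mem_mul ha hb)

lemma aspan_comm {a b : Matrix (Fin n) (Fin n) K} (ha : a ∈ aspan G) (hb : b ∈ aspan G) :
    a * b = b * a := by
  induction ha using Submodule.span_induction with
  | mem M hM =>
    induction hb using Submodule.span_induction with
    | mem N hN => exact mset_comm G hM hN
    | zero => simp
    | add x y hx hy h1 h2 => rw [mul_add, add_mul, h1, h2]
    | smul c x hx h1 => rw [mul_smul_comm, smul_mul_assoc, h1]
  | zero => simp
  | add x y hx hy h1 h2 => rw [mul_add, add_mul, h1, h2]
  | smul c x hx h1 => rw [mul_smul_comm, smul_mul_assoc, h1]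

/-- The subalgebra spanned by the commuting matrices of `G`. -/
def AAlg : Subalgebra K (Matrix (Fin n) (Fin n) K) :=
  (aspan G).toSubalgebra (one_mem_aspan G) (fun _ _ ha hb => mul_mem_aspan G ha hb)

lemma mem_AAlg_iff {a : Matrix (Fin n) (Fin n) K} : a ∈ AAlg G ↔ a ∈ aspan G := Iff.rfl

lemma gmat_mem_AAlg (hG : ∀ A ∈ G, ∀ B ∈ G, A * B = B * A)
    {g : Matrix.GeneralLinearGroup (Fin n) K} (hg : g ∈ G) :
    (g : Matrix (Fin n) (Fin n) K) ∈ AAlg G := subset_span (mem_mset G hG hg)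

instance : CommRing ↥(AAlg G) :=
  { (inferInstance : Ring ↥(AAlg G)) with
    mul_comm := fun a b => Subtype.ext (aspan_comm G a.2 b.2) }

instance : FiniteDimensional K ↥(AAlg G) :=
  inferInstanceAs (FiniteDimensional K ↥(aspan G))

instance : SMul ↥(AAlg G) (Fin n → K) :=
  ⟨fun a w => (a : Matrix (Fin n) (Fin n) K).mulVec w⟩

lemma asmul_def (a : ↥(AAlg G)) (w : Fin n → K) :
    a • w = (a : Matrix (Fin n) (Fin n) K).mulVec w := rfl

instance : Module ↥(AAlg G) (Fin n → K) where
  one_smul w := by rw [asmul_def]; exact Matrix.one_mulVec w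
  mul_smul a b w := by
    simp only [asmul_def, MulMemClass.coe_mul]
    rw [Matrix.mulVec_mulVec]
  smul_zero a := Matrix.mulVec_zero _
  smul_add a w w' := Matrix.mulVec_add _ _ _
  add_smul a b w := by
    simp only [asmul_def, AddMemClass.coe_add]
    exact Matrix.add_mulVec _ _ _
  zero_smul w := by
    simp only [asmul_def, ZeroMemClass.coe_zero]
    exact Matrix.zero_mulVec w

instance : IsScalarTower K ↥(AAlg G) (Fin n → K) :=
  ⟨fun c a w => by
    simp only [asmul_def, SetLike.val_smul]
    rw [Matrix.smul_mulVec]⟩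

instance : Module.Finite ↥(AAlg G) (Fin n → K) :=
  Module.Finite.of_restrictScalars_finite K _ _

instance : IsNoetherian ↥(AAlg G) (Fin n → K) :=
  isNoetherian_of_tower K inferInstance

/-- `m • ⊤` is a proper submodule for any proper ideal `m` of the algebra. -/
lemma smul_top_ne_top (m : Ideal ↥(AAlg G)) (hm : m ≠ ⊤) :
    (m • (⊤ : Submodule ↥(AAlg G) (Fin n → K))) ≠ ⊤ := by
  intro htop
  obtain ⟨r, hr1, hr0⟩ :=
    Submodule.exists_sub_one_mem_and_smul_eq_zero_of_fg_of_le_smul m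
      (⊤ : Submodule ↥(AAlg G) (Fin n → K))
      (Module.Finite.fg_top) (by rw [htop])
  have hrv : ∀ w : Fin n → K, (r : Matrix (Fin n) (Fin n) K).mulVec w = 0 := by
    intro w
    exact hr0 w trivial
  have hrz : (r : Matrix (Fin n) (Fin n) K) = 0 := by
    ext i j
    have := congrFun (hrv (Pi.single j 1)) i
    simpa [Matrix.mulVec_single] using this
  have : r = 0 := Subtype.ext hrz
  rw [this, zero_sub] at hr1
  exact hm (m.eq_top_of_isUnit_mem (m.neg_mem_iff.mp hr1) isUnit_one)

/-- Choose a coatom (maximal proper submodule) above any proper submodule. -/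
lemma exists_coatom_above (W : Submodule ↥(AAlg G) (Fin n → K)) (hW : W ≠ ⊤) :
    ∃ Y, W ≤ Y ∧ IsCoatom Y := by
  rcases (IsCoatomic.eq_top_or_exists_le_coatom W) with h | ⟨Y, hY, hle⟩
  · exact absurd h hW
  · exact ⟨Y, hle, hY⟩


/-- Any simple module over a finite-dimensional commutative algebra over `K = ℝ, ℂ`
has `K`-dimension 1 or 2. -/
lemma simple_module_finrank_aux {R M : Type*} [CommRing R] [Algebra K R]
    [FiniteDimensional K R] [AddCommGroup M] [Module R M] [Module K M]
    [IsScalarTower K R M] (hsimp : IsSimpleModule R M) :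
    finrank K M = 1 ∨ finrank K M = 2 := by
  haveI : Nontrivial M := IsSimpleModule.nontrivial R M
  obtain ⟨s₀, hs₀⟩ := exists_ne (0 : M)
  set f := LinearMap.toSpanSingleton R M s₀ with hf
  have hsurj : Function.Surjective f := by
    have hr : LinearMap.range f ≠ ⊥ := by
      intro h
      apply hs₀
      have h1 : f 1 ∈ LinearMap.range f := LinearMap.mem_range_self f 1
      rw [h] at h1
      simpa [hf, LinearMap.toSpanSingleton_apply] using h1
    rcases eq_bot_or_eq_top (LinearMap.range f) with h | h
    · exact absurd h hr
    · exact LinearMap.range_eq_top.mp h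
  set I := LinearMap.ker f with hI
  have E : (R ⧸ I) ≃ₗ[R] M := f.quotKerEquivOfSurjective hsurj
  haveI : IsSimpleModule R (R ⧸ I) := IsSimpleModule.congr E
  haveI hImax : Ideal.IsMaximal (I : Ideal R) :=
    Ideal.isMaximal_def.mpr (isSimpleModule_iff_isCoatom.mp this)
  letI : Field (R ⧸ I) := Ideal.Quotient.field (I : Ideal R)
  have hdim : finrank K M = finrank K (R ⧸ I) := (E.restrictScalars K).symm.finrank_eq
  haveI : FiniteDimensional K (R ⧸ I) :=
    Module.Finite.of_surjective ((Submodule.mkQ I).restrictScalars K)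
      (Submodule.mkQ_surjective I)
  letI : Algebra ℝ (R ⧸ I) := ((algebraMap K (R ⧸ I)).comp (algebraMap ℝ K)).toAlgebra
  haveI : IsScalarTower ℝ K (R ⧸ I) := IsScalarTower.of_algebraMap_eq (fun x => rfl)
  haveI : Module.Finite ℝ (R ⧸ I) := Module.Finite.trans K (R ⧸ I)
  haveI : Algebra.IsAlgebraic ℝ (R ⧸ I) := Algebra.IsAlgebraic.of_finite ℝ (R ⧸ I)
  haveI : IsTorsionFree ℝ (R ⧸ I) :=
    NoZeroSMulDivisors.iff_algebraMap_injective.mpr (algebraMap ℝ (R ⧸ I)).injective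
  let ψ : (R ⧸ I) →ₐ[ℝ] ℂ := IsAlgClosed.lift
  have h2 : finrank ℝ (R ⧸ I) ≤ 2 := by
    have hinj : Function.Injective ψ.toLinearMap := ψ.toRingHom.injective
    have := LinearMap.finrank_le_finrank_of_injective hinj
    rwa [Complex.finrank_real_complex] at this
  have hmul : finrank ℝ K * finrank K (R ⧸ I) = finrank ℝ (R ⧸ I) :=
    finrank_mul_finrank ℝ K (R ⧸ I)
  have hK : 0 < finrank ℝ K := finrank_pos
  have hL1 : 0 < finrank K (R ⧸ I) := finrank_pos
  have hle : finrank K (R ⧸ I) ≤ 2 := by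
    calc finrank K (R ⧸ I) ≤ finrank ℝ K * finrank K (R ⧸ I) :=
          Nat.le_mul_of_pos_left _ hK
    _ = finrank ℝ (R ⧸ I) := hmul
    _ ≤ 2 := h2
  rw [hdim]
  omega

lemma finrank_coatom (Y : Submodule ↥(AAlg G) (Fin n → K)) (hY : IsCoatom Y) :
    finrank K ↥(Y.restrictScalars K) = n - 1 ∨ finrank K ↥(Y.restrictScalars K) = n - 2 := by
  haveI hsimp : IsSimpleModule ↥(AAlg G) ((Fin n → K) ⧸ Y) :=
    isSimpleModule_iff_isCoatom.mpr hY
  have hq12 : finrank K ((Fin n → K) ⧸ Y) = 1 ∨ finrank K ((Fin n → K) ⧸ Y) = 2 :=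
    simple_module_finrank_aux hsimp
  have hq : finrank K ((Fin n → K) ⧸ (Y.restrictScalars K)) = finrank K ((Fin n → K) ⧸ Y) :=
    (Submodule.Quotient.restrictScalarsEquiv K Y).finrank_eq
  have hsum : finrank K ((Fin n → K) ⧸ (Y.restrictScalars K))
      + finrank K ↥(Y.restrictScalars K) = finrank K (Fin n → K) :=
    Submodule.finrank_quotient_add_finrank _
  have hV : finrank K (Fin n → K) = n := by
    simp [Module.finrank_pi]
  rcases hq12 with h | h <;> rw [hq, h, hV] at hsum <;> omega


/-- Any finite set of maximal ideals of the algebra has at most `n` elements. -/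
lemma maximal_finset_card_le (F : Finset (Ideal ↥(AAlg G)))
    (hF : ∀ m ∈ F, Ideal.IsMaximal m) : F.card ≤ n := by
  classical
  set N : Ideal ↥(AAlg G) → Submodule ↥(AAlg G) (Fin n → K) := fun m => m • ⊤ with hN
  set φ : (Fin n → K) →ₗ[K] (Π i : F, (Fin n → K) ⧸ ((N i.1).restrictScalars K)) :=
    LinearMap.pi (fun i => ((N i.1).restrictScalars K).mkQ) with hφ
  have hpair : ∀ i : F, ∀ j : F, j ≠ i → ∃ t : ↥(AAlg G), t ∈ j.1 ∧ t ∉ i.1 := by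
    intro i j hne
    by_contra h
    push_neg at h
    have hle : j.1 ≤ i.1 := fun t ht => h t ht
    have := Ideal.IsMaximal.eq_of_le (hF j.1 j.2) (hF i.1 i.2).ne_top hle
    exact hne (Subtype.ext this)
  choose tf htmem htnot using hpair
  have hcrt : ∀ i : F, ∃ e : ↥(AAlg G), (e - 1) ∈ i.1 ∧ ∀ j : F, j ≠ i → e ∈ j.1 := by
    intro i
    set s := (Finset.univ.erase i).attach with hs
    set c : ↥(AAlg G) := ∏ j ∈ s, tf i j.1 (Finset.ne_of_mem_erase j.2) with hc
    have hcmem : ∀ j : F, j ≠ i → c ∈ j.1 := by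
      intro j hji
      have hjs : (⟨j, Finset.mem_erase.mpr ⟨hji, Finset.mem_univ j⟩⟩ :
          {x // x ∈ Finset.univ.erase i}) ∈ s := Finset.mem_attach _ _
      rw [hc, Finset.prod_eq_prod_diff_singleton_mul hjs]
      exact Ideal.mul_mem_left _ _ (htmem i j hji)
    have hcnot : c ∉ i.1 := by
      have hpr : (i.1 : Ideal ↥(AAlg G)).IsPrime := (hF i.1 i.2).isPrime
      rw [hc]
      refine Finset.prod_induction _ (fun x => x ∉ i.1) ?_ ?_ ?_
      · intro a b ha hb hab
        rcases hpr.mem_or_mem hab with h | h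
        exacts [ha h, hb h]
      · intro h
        exact (hF i.1 i.2).ne_top (Ideal.eq_top_of_isUnit_mem _ h isUnit_one)
      · intro j _
        exact htnot i j.1 (Finset.ne_of_mem_erase j.2)
    obtain ⟨d, μ, hμ, heq⟩ := (hF i.1 i.2).exists_inv hcnot
    refine ⟨d * c, ?_, fun j hji => Ideal.mul_mem_left _ _ (hcmem j hji)⟩
    have hdc : d * c - 1 = -μ := by rw [← heq]; ring
    rw [hdc]
    exact i.1.neg_mem hμ
  have hsurj : Function.Surjective φ := by
    intro z
    have hy : ∀ i : F, ∃ y : Fin n → K, Submodule.Quotient.mk y = z i :=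
      fun i => Submodule.Quotient.mk_surjective _ (z i)
    choose y hyz using hy
    choose e he1 he2 using hcrt
    refine ⟨∑ i : F, e i • y i, ?_⟩
    funext i
    rw [hφ]
    simp only [LinearMap.pi_apply, Submodule.mkQ_apply]
    rw [← hyz i]
    refine (Submodule.Quotient.eq _).mpr ?_
    have hsplit : (∑ j : F, e j • y j) = e i • y i + ∑ j ∈ Finset.univ.erase i, e j • y j :=
      (Finset.add_sum_erase _ _ (Finset.mem_univ i)).symm
    have heq2 : (∑ j : F, e j • y j) - y i
        = (e i - 1) • y i + ∑ j ∈ Finset.univ.erase i, e j • y j := by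
      rw [hsplit, sub_smul, one_smul]
      abel
    rw [heq2]
    refine Submodule.add_mem _ ?_ ?_
    · exact Submodule.smul_mem_smul (he1 i) Submodule.mem_top
    · refine Submodule.sum_mem _ ?_
      intro j hj
      exact Submodule.smul_mem_smul (he2 j i (fun h => (Finset.mem_erase.mp hj).1 h.symm)) Submodule.mem_top
  haveI hfin : ∀ i : F, Module.Finite K ((Fin n → K) ⧸ ((N i.1).restrictScalars K)) := fun i =>
    Module.Finite.of_surjective ((N i.1).restrictScalars K).mkQ (Submodule.mkQ_surjective _)
  have hfr : finrank K (Π i : F, (Fin n → K) ⧸ ((N i.1).restrictScalars K))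
      ≤ finrank K (Fin n → K) := by
    have h1 := LinearMap.finrank_range_le φ
    rwa [LinearMap.range_eq_top.mpr hsurj, finrank_top] at h1
  have hpi : finrank K (Π i : F, (Fin n → K) ⧸ ((N i.1).restrictScalars K))
      = ∑ i : F, finrank K ((Fin n → K) ⧸ ((N i.1).restrictScalars K)) :=
    Module.finrank_pi_fintype K
  have hone : ∀ i : F, 1 ≤ finrank K ((Fin n → K) ⧸ ((N i.1).restrictScalars K)) := by
    intro i
    have hne : N i.1 ≠ ⊤ := smul_top_ne_top G i.1 (hF i.1 i.2).ne_top
    have hlt : (N i.1).restrictScalars K < ⊤ := by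
      refine lt_top_iff_ne_top.mpr (fun h => hne ?_)
      refine Submodule.eq_top_iff'.mpr (fun w => ?_)
      have : w ∈ (N i.1).restrictScalars K := by rw [h]; trivial
      exact this
    haveI := Submodule.Quotient.nontrivial_iff.mpr hlt.ne
    exact finrank_pos
  have hV : finrank K (Fin n → K) = n := by simp [Module.finrank_pi]
  calc F.card = ∑ _i : F, 1 := by simp
    _ ≤ ∑ i : F, finrank K ((Fin n → K) ⧸ ((N i.1).restrictScalars K)) :=
        Finset.sum_le_sum (fun i _ => hone i)
    _ = finrank K (Π i : F, (Fin n → K) ⧸ ((N i.1).restrictScalars K)) := hpi.symm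
    _ ≤ n := by rwa [hV] at hfr

/-- The set of maximal ideals of the algebra is finite. -/
lemma maximal_ideals_finite : {m : Ideal ↥(AAlg G) | Ideal.IsMaximal m}.Finite := by
  by_contra hinf
  obtain ⟨F, hFsub, hFcard⟩ :=
    Set.Infinite.exists_subset_card_eq hinf (n + 1)
  have := maximal_finset_card_le G F (fun m hm => hFsub hm)
  omega


lemma orbit_mem_self (v : Fin n → K) : v ∈ glOrbit G v :=
  ⟨1, G.one_mem, by simp [Matrix.one_mulVec]⟩

lemma orbit_mul_mem {v : Fin n → K} {g : Matrix.GeneralLinearGroup (Fin n) K} (hg : g ∈ G)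
    {w : Fin n → K} (hw : w ∈ glOrbit G v) :
    (g : Matrix (Fin n) (Fin n) K).mulVec w ∈ glOrbit G v := by
  obtain ⟨h, hh, rfl⟩ := hw
  exact ⟨g * h, G.mul_mem hg hh, by rw [Units.val_mul, ← Matrix.mulVec_mulVec]⟩

/-- The span of an orbit is invariant under the algebra. -/
lemma aspan_maps_orbit_span {v : Fin n → K}
    {M : Matrix (Fin n) (Fin n) K} (hM : M ∈ aspan G) :
    ∀ w ∈ span K (glOrbit G v), M.mulVec w ∈ span K (glOrbit G v) := by
  induction hM using Submodule.span_induction with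
  | mem M hMm =>
    intro w hw
    induction hw using Submodule.span_induction with
    | mem u hu =>
      obtain ⟨h, hh, rfl⟩ := hu
      obtain ⟨g0, hg0, hg0M⟩ := hMm.1
      rw [← hg0M]
      exact subset_span (orbit_mul_mem G hg0 ⟨h, hh, rfl⟩)
    | zero => rw [Matrix.mulVec_zero]; exact Submodule.zero_mem _
    | add u u' hu hu' h1 h2 => rw [Matrix.mulVec_add]; exact Submodule.add_mem _ h1 h2
    | smul c u hu h1 => rw [Matrix.mulVec_smul]; exact Submodule.smul_mem _ c h1
  | zero => intro w hw; rw [Matrix.zero_mulVec]; exact Submodule.zero_mem _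
  | add M N hMm hNm h1 h2 =>
    intro w hw
    rw [Matrix.add_mulVec]
    exact Submodule.add_mem _ (h1 w hw) (h2 w hw)
  | smul c M hMm h1 =>
    intro w hw
    rw [Matrix.smul_mulVec]
    exact Submodule.smul_mem _ c (h1 w hw)


/-- **Key minimality lemma**: if `x` lies in the closure of the orbit of `v` and every algebra
element mapping some vector onto `x` is invertible, then the orbit closures agree. -/
lemma closure_orbit_eq (hG : ∀ A ∈ G, ∀ B ∈ G, A * B = B * A)
    {U : Set (Fin n → K)}
    (hUkey : ∀ x ∈ U, ∀ (a : ↥(AAlg G)) (w : Fin n → K),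
      (a : Matrix (Fin n) (Fin n) K).mulVec w = x → IsUnit a)
    {v x : Fin n → K} (hx : x ∈ closure (glOrbit G v)) (hxU : x ∈ U) :
    closure (glOrbit G x) = closure (glOrbit G v) := by
  classical
  set P : Submodule K (Fin n → K) := span K (glOrbit G v) with hP
  have hPclosed : IsClosed (P : Set (Fin n → K)) := Submodule.closed_of_finiteDimensional P
  have horbP : glOrbit G v ⊆ (P : Set (Fin n → K)) := subset_span
  have hclP : closure (glOrbit G v) ⊆ (P : Set (Fin n → K)) :=
    closure_minimal horbP hPclosed
  have hxP : x ∈ P := hclP hx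
  have hvP : v ∈ P := horbP (orbit_mem_self G v)
  have hmaps : ∀ (a : ↥(AAlg G)), ∀ w ∈ P, (a : Matrix (Fin n) (Fin n) K).mulVec w ∈ P :=
    fun a w hw => aspan_maps_orbit_span G a.2 w hw
  -- the restriction homomorphism into continuous endomorphisms of `P`
  set πL : ↥(AAlg G) →ₗ[K] (↥P →L[K] ↥P) :=
    { toFun := fun a =>
        LinearMap.toContinuousLinearMap
          ((Matrix.mulVecLin (a : Matrix (Fin n) (Fin n) K)).restrict (hmaps a))
      map_add' := by
        intro a b
        ext w
        exact congrFun (Matrix.add_mulVec _ _ w.1) _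
      map_smul' := by
        intro c a
        ext w
        exact congrFun (Matrix.smul_mulVec c _ w.1) _ } with hπL
  have hπapply : ∀ (a : ↥(AAlg G)) (w : ↥P),
      ((πL a) w : Fin n → K) = (a : Matrix (Fin n) (Fin n) K).mulVec w := fun a w => rfl
  have hπmul : ∀ a b : ↥(AAlg G), πL (a * b) = πL a * πL b := by
    intro a b
    ext w
    have : ((a : Matrix (Fin n) (Fin n) K) * b).mulVec w.1
        = (a : Matrix (Fin n) (Fin n) K).mulVec ((b : Matrix (Fin n) (Fin n) K).mulVec w.1) :=
      (Matrix.mulVec_mulVec _ _ _).symm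
    exact congrFun this _
  have hπone : πL 1 = 1 := by
    ext w
    exact congrFun (Matrix.one_mulVec w.1) _
  -- the evaluation map at `v`
  set e' : ↥(AAlg G) →ₗ[K] ↥P :=
    { toFun := fun a => ⟨(a : Matrix (Fin n) (Fin n) K).mulVec v, hmaps a v hvP⟩
      map_add' := by intro a b; exact Subtype.ext (Matrix.add_mulVec _ _ v)
      map_smul' := by intro c a; exact Subtype.ext (Matrix.smul_mulVec c _ v) } with he'
  have he'surj : Function.Surjective e' := by
    have haux : ∀ w ∈ P, ∃ a : ↥(AAlg G), (a : Matrix (Fin n) (Fin n) K).mulVec v = w := by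
      intro w hw
      induction hw using Submodule.span_induction with
      | mem u hu =>
        obtain ⟨g, hg, rfl⟩ := hu
        exact ⟨⟨_, gmat_mem_AAlg G hG hg⟩, rfl⟩
      | zero => exact ⟨0, Matrix.zero_mulVec v⟩
      | add u u' hu hu' h1 h2 =>
        obtain ⟨a, ha⟩ := h1; obtain ⟨b, hb⟩ := h2
        exact ⟨a + b, by rw [AddMemClass.coe_add, Matrix.add_mulVec, ha, hb]⟩
      | smul c u hu h1 =>
        obtain ⟨a, ha⟩ := h1
        exact ⟨c • a, by rw [SetLike.val_smul, Matrix.smul_mulVec, ha]⟩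
    intro p
    obtain ⟨a, ha⟩ := haux p.1 p.2
    exact ⟨a, Subtype.ext ha⟩
  have hker : ∀ a : ↥(AAlg G), (a : Matrix (Fin n) (Fin n) K).mulVec v = 0 → πL a = 0 := by
    intro a hav
    have hz : ∀ w ∈ P, (a : Matrix (Fin n) (Fin n) K).mulVec w = 0 := by
      intro w hw
      induction hw using Submodule.span_induction with
      | mem u hu =>
        obtain ⟨g, hg, rfl⟩ := hu
        rw [Matrix.mulVec_mulVec, aspan_comm G a.2 (subset_span (mem_mset G hG hg)),
          ← Matrix.mulVec_mulVec, hav, Matrix.mulVec_zero]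
      | zero => rw [Matrix.mulVec_zero]
      | add u u' hu hu' h1 h2 => rw [Matrix.mulVec_add, h1, h2, add_zero]
      | smul c u hu h1 => rw [Matrix.mulVec_smul, h1, smul_zero]
    ext w
    exact congrFun (hz w.1 w.2) _
  obtain ⟨q0, hq0⟩ := e'.exists_rightInverse_of_surjective (LinearMap.range_eq_top.mpr he'surj)
  have hq0app : ∀ p : ↥P, e' (q0 p) = p := by
    intro p
    have := LinearMap.congr_fun hq0 p
    simpa using this
  set Q : ↥P →ₗ[K] (↥P →L[K] ↥P) := πL.comp q0 with hQdef
  have hQcont : Continuous Q := LinearMap.continuous_of_finiteDimensional (𝕜 := K) (E := ↥P) (F' := ↥P →L[K] ↥P) Q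
  have hQ : ∀ a : ↥(AAlg G), Q (e' a) = πL a := by
    intro a
    have hdiff : ((q0 (e' a) - a : ↥(AAlg G)) :
        Matrix (Fin n) (Fin n) K).mulVec v = 0 := by
      have h1 : e' (q0 (e' a) - a) = 0 := by rw [map_sub, hq0app, sub_self]
      have h2 := congrArg Subtype.val h1
      exact h2
    have h3 : πL (q0 (e' a) - a) = 0 := hker _ hdiff
    have h4 : πL (q0 (e' a)) = πL a := by
      have h5 : πL (q0 (e' a)) - πL a = πL (q0 (e' a) - a) := (map_sub πL _ _).symm
      have h6 : πL (q0 (e' a)) - πL a = 0 := h5.trans h3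
      exact sub_eq_zero.mp h6
    exact h4
  -- get a sequence from the closure membership
  obtain ⟨u, hu_orb, hu_lim⟩ := mem_closure_iff_seq_limit.mp hx
  choose g hgG hgv using hu_orb
  set xP : ↥P := ⟨x, hxP⟩ with hxP
  set vP : ↥P := ⟨v, hvP⟩ with hvP
  have huu_lim : Filter.Tendsto (fun k => (⟨u k, horbP (⟨g k, hgG k, hgv k⟩)⟩ : ↥P))
      Filter.atTop (nhds xP) := tendsto_subtype_rng.mpr hu_lim
  set aa : ℕ → ↥(AAlg G) := fun k => ⟨_, gmat_mem_AAlg G hG (hgG k)⟩ with haa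
  have he'aa : ∀ k, e' (aa k) = ⟨u k, horbP (⟨g k, hgG k, hgv k⟩)⟩ :=
    fun k => Subtype.ext (hgv k)
  set γ : ↥P →L[K] ↥P := Q xP with hγ
  have hT : Filter.Tendsto (fun k => πL (aa k)) Filter.atTop (nhds γ) := by
    have := (hQcont.tendsto xP).comp huu_lim
    refine this.congr ?_
    intro k
    rw [Function.comp_apply, ← he'aa k, hQ]
  set a₀ : ↥(AAlg G) := q0 xP with ha₀
  have hπa₀ : πL a₀ = γ := rfl
  have ha₀v : (a₀ : Matrix (Fin n) (Fin n) K).mulVec v = x :=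
    congrArg Subtype.val (hq0app xP)
  have ha₀unit : IsUnit a₀ := hUkey x hxU a₀ v ha₀v
  obtain ⟨w0, hw0⟩ := ha₀unit
  set b : ↥(AAlg G) := (↑w0⁻¹ : ↥(AAlg G)) with hb
  have hba : b * a₀ = 1 := by rw [← hw0]; exact w0.inv_mul
  have hab : a₀ * b = 1 := by rw [← hw0]; exact w0.mul_inv
  set δ : ↥P →L[K] ↥P := πL b with hδ
  have hδγ : δ * γ = 1 := by rw [hδ, ← hπa₀, ← hπmul, hba, hπone]
  have hγδ : γ * δ = 1 := by rw [hδ, ← hπa₀, ← hπmul, hab, hπone]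
  set uγ : (↥P →L[K] ↥P)ˣ := ⟨γ, δ, hγδ, hδγ⟩ with huγ
  -- inverses of the sequence
  set binv : ℕ → ↥(AAlg G) := fun k => ⟨_, gmat_mem_AAlg G hG (G.inv_mem (hgG k))⟩ with hbinv
  have hmulinv : ∀ k, aa k * binv k = 1 := by
    intro k
    refine Subtype.ext ?_
    show ((g k : Matrix (Fin n) (Fin n) K)) * (((g k)⁻¹ : Matrix.GeneralLinearGroup (Fin n) K)
      : Matrix (Fin n) (Fin n) K) = 1
    rw [← Units.val_mul, mul_inv_cancel, Units.val_one]
  have hinvmul : ∀ k, binv k * aa k = 1 := by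
    intro k
    refine Subtype.ext ?_
    show (((g k)⁻¹ : Matrix.GeneralLinearGroup (Fin n) K) : Matrix (Fin n) (Fin n) K)
      * ((g k : Matrix (Fin n) (Fin n) K)) = 1
    rw [← Units.val_mul, inv_mul_cancel, Units.val_one]
  set uT : ℕ → (↥P →L[K] ↥P)ˣ := fun k =>
    ⟨πL (aa k), πL (binv k),
      by rw [← hπmul, hmulinv, hπone], by rw [← hπmul, hinvmul, hπone]⟩ with huT
  have hTinv : Filter.Tendsto (fun k => πL (binv k)) Filter.atTop (nhds δ) := by
    have hcont := NormedRing.inverse_continuousAt (R := ↥P →L[K] ↥P) uγ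
    have h1 : Filter.Tendsto (fun k => Ring.inverse (πL (aa k))) Filter.atTop
        (nhds (Ring.inverse γ)) := (hcont.tendsto).comp hT
    have h2 : ∀ k, Ring.inverse (πL (aa k)) = πL (binv k) := by
      intro k
      have : πL (aa k) = ↑(uT k) := rfl
      rw [this, Ring.inverse_unit]
      rfl
    have h3 : Ring.inverse γ = δ := by
      have : γ = ↑uγ := rfl
      rw [this, Ring.inverse_unit]
      rfl
    rw [h3] at h1
    exact h1.congr h2
  have hγv : γ vP = xP := by
    rw [← hπa₀]
    exact Subtype.ext ha₀v
  have hδx : δ xP = vP := by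
    have : δ (γ vP) = (δ * γ) vP := rfl
    rw [hγv] at this
    rw [this, hδγ]
    rfl
  -- now the two inclusions
  apply Set.Subset.antisymm
  · -- closure (orbit x) ⊆ closure (orbit v)
    refine closure_minimal ?_ isClosed_closure
    rintro w ⟨h, hh, rfl⟩
    have hcont : Continuous fun z : Fin n → K =>
        (h : Matrix (Fin n) (Fin n) K).mulVec z :=
      (Matrix.mulVecLin (h : Matrix (Fin n) (Fin n) K)).continuous_of_finiteDimensional
    refine mem_closure_of_tendsto ((hcont.tendsto x).comp hu_lim) ?_
    refine Filter.Eventually.of_forall (fun k => ?_)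
    rw [Function.comp_apply, ← hgv k]
    exact orbit_mul_mem G hh ⟨g k, hgG k, rfl⟩
  · -- closure (orbit v) ⊆ closure (orbit x)
    intro y hy
    obtain ⟨u', hu'_orb, hu'_lim⟩ := mem_closure_iff_seq_limit.mp hy
    choose h hhG hhv using hu'_orb
    have hclosed : IsClosed (closure (glOrbit G x)) := isClosed_closure
    rw [← closure_closure (s := glOrbit G x)]
    refine mem_closure_of_tendsto hu'_lim ?_
    refine Filter.Eventually.of_forall (fun j => ?_)
    -- each u' j lies in the closure of the orbit of x
    set hjm : ↥(AAlg G) := ⟨_, gmat_mem_AAlg G hG (hhG j)⟩ with hhjm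
    have hFcont : Continuous fun T : ↥P →L[K] ↥P => ((πL hjm (T xP) : ↥P) : Fin n → K) :=
      continuous_subtype_val.comp ((πL hjm).continuous.comp
        (ContinuousLinearMap.apply K ↥P xP).continuous)
    have hlim2 : Filter.Tendsto (fun k => ((πL hjm (πL (binv k) xP) : ↥P) : Fin n → K))
        Filter.atTop (nhds ((πL hjm (δ xP) : ↥P) : Fin n → K)) :=
      (hFcont.tendsto δ).comp hTinv
    have hval : ((πL hjm (δ xP) : ↥P) : Fin n → K) = u' j := by
      rw [hδx]
      have : ((πL hjm vP : ↥P) : Fin n → K)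
          = (hjm : Matrix (Fin n) (Fin n) K).mulVec v := rfl
      rw [this]
      exact hhv j
    rw [hval] at hlim2
    refine mem_closure_of_tendsto hlim2 ?_
    refine Filter.Eventually.of_forall (fun k => ?_)
    refine ⟨h j * (g k)⁻¹, G.mul_mem (hhG j) (G.inv_mem (hgG k)), ?_⟩
    rw [Units.val_mul]
    rw [← Matrix.mulVec_mulVec]
    rfl


end StructThm

open StructThm Module in
/-- **Structure's Theorem.** -/
theorem structure_theorem {K : Type*} [RCLike K] (n : ℕ) (hn : 1 ≤ n)
    (G : Subgroup (Matrix.GeneralLinearGroup (Fin n) K))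
    (hGcomm : ∀ A ∈ G, ∀ B ∈ G, A * B = B * A) :
    ∃ U : Set (Fin n → K),
      IsOpen U ∧ Dense U ∧
      (∀ A ∈ G, ∀ v ∈ U, (A : Matrix (Fin n) (Fin n) K).mulVec v ∈ U) ∧
      (∀ v : Fin n → K, glOrbit G v ⊆ U →
        ∀ x ∈ closure (glOrbit G v) ∩ U,
          closure (glOrbit G x) ∩ U = closure (glOrbit G v) ∩ U) ∧
      (∃ (r : ℕ) (V : Fin r → Submodule K (Fin n → K)), r ≤ n ∧
        (∀ k, ∀ A ∈ G, ∀ x ∈ V k, (A : Matrix (Fin n) (Fin n) K).mulVec x ∈ V k) ∧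
        (∀ k, Module.finrank K (V k) = n - 1 ∨ Module.finrank K (V k) = n - 2) ∧
        Uᶜ = ⋃ k, (V k : Set (Fin n → K))) := by
  classical
  have hfin := maximal_ideals_finite G
  set Mfin := hfin.toFinset with hMfin
  set r := Mfin.card with hr
  have hrn : r ≤ n :=
    maximal_finset_card_le G Mfin (fun m hm => (hfin.mem_toFinset).mp hm)
  set enum : Fin r ≃ {x // x ∈ Mfin} := Mfin.equivFin.symm with henum
  have hYex : ∀ i : {x // x ∈ Mfin},
      ∃ Y : Submodule ↥(AAlg G) (Fin n → K), (i.1 • ⊤) ≤ Y ∧ IsCoatom Y := by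
    intro i
    have hmax : Ideal.IsMaximal i.1 := (hfin.mem_toFinset).mp i.2
    exact exists_coatom_above G _ (smul_top_ne_top G i.1 hmax.ne_top)
  choose Yc hYle hYco using hYex
  set Vk : Fin r → Submodule K (Fin n → K) :=
    fun k => (Yc (enum k)).restrictScalars K with hVk
  set U : Set (Fin n → K) := (⋃ k, (Vk k : Set (Fin n → K)))ᶜ with hU
  have hVclosed : ∀ k, IsClosed ((Vk k : Set (Fin n → K))) :=
    fun k => Submodule.closed_of_finiteDimensional _
  have hVne : ∀ k, Vk k ≠ ⊤ := by
    intro k htop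
    apply (hYco (enum k)).1
    refine Submodule.eq_top_iff'.mpr (fun w => ?_)
    have : w ∈ Vk k := by rw [htop]; trivial
    exact this
  have hVdense : ∀ k, Dense ((Vk k : Set (Fin n → K)))ᶜ := by
    intro k
    have hint : interior ((Vk k : Set (Fin n → K))) = ∅ := by
      by_contra h
      exact hVne k (Submodule.eq_top_of_nonempty_interior' _
        (Set.nonempty_iff_ne_empty.mpr h))
    rw [dense_iff_closure_eq, closure_compl, hint, Set.compl_empty]
  have hUopen : IsOpen U := by
    rw [hU]
    exact (isClosed_iUnion_of_finite hVclosed).isOpen_compl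
  have hUdense : Dense U := by
    rw [hU, Set.compl_iUnion]
    exact dense_iInter_of_isOpen (fun k => (hVclosed k).isOpen_compl) hVdense
  -- invariance of the coatoms under G
  have hVinv : ∀ k, ∀ A ∈ G, ∀ w ∈ Vk k,
      (A : Matrix (Fin n) (Fin n) K).mulVec w ∈ Vk k := by
    intro k A hA w hw
    have hmem : w ∈ Yc (enum k) := hw
    have : (⟨_, gmat_mem_AAlg G hGcomm hA⟩ : ↥(AAlg G)) • w ∈ Yc (enum k) :=
      Submodule.smul_mem _ _ hmem
    exact this
  have hUinv : ∀ A ∈ G, ∀ v ∈ U, (A : Matrix (Fin n) (Fin n) K).mulVec v ∈ U := by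
    intro A hA v hv
    intro hmem
    apply hv
    simp only [Set.mem_iUnion] at hmem ⊢
    obtain ⟨k, hk⟩ := hmem
    refine ⟨k, ?_⟩
    have h2 := hVinv k A⁻¹ (G.inv_mem hA) _ hk
    have h3 : ((A⁻¹ : Matrix.GeneralLinearGroup (Fin n) K) : Matrix (Fin n) (Fin n) K).mulVec
        ((A : Matrix (Fin n) (Fin n) K).mulVec v) = v := by
      rw [Matrix.mulVec_mulVec, ← Units.val_mul, inv_mul_cancel, Units.val_one,
        Matrix.one_mulVec]
    rwa [h3] at h2
  -- the key nonunit property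
  have hUkey : ∀ x ∈ U, ∀ (a : ↥(AAlg G)) (w : Fin n → K),
      (a : Matrix (Fin n) (Fin n) K).mulVec w = x → IsUnit a := by
    intro x hxU a w haw
    by_contra hnu
    obtain ⟨m, hmmax, ham⟩ := exists_max_ideal_of_mem_nonunits (mem_nonunits_iff.mpr hnu)
    have hmmem : m ∈ Mfin := (hfin.mem_toFinset).mpr hmmax
    set i : {x // x ∈ Mfin} := ⟨m, hmmem⟩ with hi
    set k : Fin r := enum.symm i with hk
    have henumk : enum k = i := enum.apply_symm_apply i
    have hxY : x ∈ Yc i := by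
      have h1 : x ∈ (m • ⊤ : Submodule ↥(AAlg G) (Fin n → K)) := by
        rw [← haw]
        exact Submodule.smul_mem_smul ham Submodule.mem_top
      exact hYle i h1
    apply hxU
    simp only [Set.mem_iUnion]
    refine ⟨k, ?_⟩
    show x ∈ (Yc (enum k)).restrictScalars K
    rw [henumk]
    exact hxY
  refine ⟨U, hUopen, hUdense, hUinv, ?_, r, Vk, hrn, hVinv, ?_, by rw [hU, compl_compl]⟩
  · intro v hvorb x hx
    have heq := closure_orbit_eq G hGcomm hUkey hx.1 hx.2
    rw [heq]
  · intro k
    exact finrank_coatom G (Yc (enum k)) (hYco (enum k))
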